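/- Let Δ : ℤ → ℤ be 3-periodic with values Δ₁ := Δ(1), Δ₂ := Δ(2), Δ₃ := Δ(3), let P ∈ ℤ[[t]], and let H : ℤ → ℤ[[t]] satisfy, for every n ∈ ℤ, H_n − Δ(−n)·t·H_{n+1} + Δ(−n−2)·t²·H_{n+2} − t³·H_{n+3} = P. Let D be the 3×3 matrix over ℤ[[t]] with rows (1 − t³, −Δ₃·t, Δ₁·t²), (Δ₃·t², 1 − t³, −Δ₂·t), (−Δ₁·t, Δ₂·t², 1 − t³). Then D is a unit in the ring of 3×3 matrices over ℤ[[t]], and D *ᵥ (H₀, H₁, H₂) = (P, P, P); consequently (H₀, H₁, H₂) = D⁻¹ *ᵥ (P, P, P). -/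

import Mathlib

open Matrix PowerSeries

/-- If `Δ : ℤ → ℤ` is 3-periodic, `P ∈ ℤ[[t]]`, the family `H : ℤ → ℤ[[t]]` satisfies
`H_n − Δ(−n)·t·H_{n+1} + Δ(−n−2)·t²·H_{n+2} − t³·H_{n+3} = P` for all `n`, and `D` is
the 3×3 matrix over `ℤ[[t]]` with rows `(1 − t³, −Δ₃t, Δ₁t²)`, `(Δ₃t², 1 − t³, −Δ₂t)`,
`(−Δ₁t, Δ₂t², 1 − t³)`, then `D` is a unit, `D *ᵥ (H₀,H₁,H₂) = (P,P,P)` and hence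
`(H₀,H₁,H₂) = D⁻¹ *ᵥ (P,P,P)`. -/
theorem hilbert_series_formula (Δ : ℤ → ℤ) (hper : ∀ n : ℤ, Δ (n + 3) = Δ n)
    (P : PowerSeries ℤ) (H : ℤ → PowerSeries ℤ)
    (hrec : ∀ n : ℤ,
      H n - C (R := ℤ) (Δ (-n)) * X * H (n + 1) + C (R := ℤ) (Δ (-n - 2)) * X ^ 2 * H (n + 2)
        - X ^ 3 * H (n + 3) = P)
    (D : Matrix (Fin 3) (Fin 3) (PowerSeries ℤ))
    (hD : D = !![1 - X ^ 3, -(C (R := ℤ) (Δ 3)) * X, C (R := ℤ) (Δ 1) * X ^ 2;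
                 C (R := ℤ) (Δ 3) * X ^ 2, 1 - X ^ 3, -(C (R := ℤ) (Δ 2)) * X;
                 -(C (R := ℤ) (Δ 1)) * X, C (R := ℤ) (Δ 2) * X ^ 2, 1 - X ^ 3]) :
    IsUnit D ∧ D *ᵥ ![H 0, H 1, H 2] = ![P, P, P] ∧
      ![H 0, H 1, H 2] = D⁻¹ *ᵥ ![P, P, P] := by
  have cast_eq : ∀ a : ℤ, ((a : PowerSeries ℤ)) = C (R := ℤ) a := fun a => by
    rw [← map_intCast (C (R := ℤ)) a, Int.cast_id]
  set G : ℤ → PowerSeries ℤ := fun n => H n - H (n + 3) with hG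
  have hGrec : ∀ n : ℤ, G n =
      C (R := ℤ) (Δ (-n)) * X * G (n + 1) - C (R := ℤ) (Δ (-n - 2)) * X ^ 2 * G (n + 2)
        + X ^ 3 * G (n + 3) := by
    intro n
    have h1 := hrec n
    have h2 := hrec (n + 3)
    have e1 : Δ (-(n + 3)) = Δ (-n) := by
      have := hper (-(n+3)); rw [← this]; ring_nf
    have e2 : Δ (-(n + 3) - 2) = Δ (-n - 2) := by
      have := hper (-(n+3) - 2); rw [← this]; ring_nf
    rw [e1, e2] at h2
    have key : H n - C (R := ℤ) (Δ (-n)) * X * H (n + 1) + C (R := ℤ) (Δ (-n - 2)) * X ^ 2 * H (n + 2)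
        - X ^ 3 * H (n + 3)
      = H (n + 3) - C (R := ℤ) (Δ (-n)) * X * H (n + 3 + 1) + C (R := ℤ) (Δ (-n - 2)) * X ^ 2 * H (n + 3 + 2)
        - X ^ 3 * H (n + 3 + 3) := by rw [h1, h2]
    have e3 : n + 1 + 3 = n + 3 + 1 := by ring
    have e4 : n + 2 + 3 = n + 3 + 2 := by ring
    simp only [hG, e3, e4]
    ring_nf
    ring_nf at key
    linear_combination key
  have hGzero : ∀ k : ℕ, ∀ n : ℤ, coeff (R := ℤ) k (G n) = 0 := by
    intro k
    induction k using Nat.strong_induction_on with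
    | _ k ih =>
      intro n
      have c1 : coeff (R := ℤ) k (C (R := ℤ) (Δ (-n)) * X * G (n + 1)) = 0 := by
        rw [mul_assoc, coeff_C_mul]
        rcases k with _ | k
        · rw [coeff_zero_X_mul, mul_zero]
        · rw [coeff_succ_X_mul, ih k (by omega), mul_zero]
      have c2 : coeff (R := ℤ) k (C (R := ℤ) (Δ (-n - 2)) * X ^ 2 * G (n + 2)) = 0 := by
        rw [mul_assoc, coeff_C_mul, coeff_X_pow_mul']
        split_ifs with h
        · rw [ih (k - 2) (by omega), mul_zero]
        · rw [mul_zero]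
      have c3 : coeff (R := ℤ) k (X ^ 3 * G (n + 3)) = 0 := by
        rw [coeff_X_pow_mul']
        split_ifs with h
        · exact ih (k - 3) (by omega) _
        · rfl
      rw [hGrec n, map_add, map_sub, c1, c2, c3]
      ring
  have hHper : ∀ n : ℤ, H (n + 3) = H n := by
    intro n
    have h0 : H n - H (n + 3) = 0 :=
      PowerSeries.ext fun k => by
        have := hGzero k n; simp only [hG] at this; simpa using this
    exact (sub_eq_zero.mp h0).symm
  have d30 : Δ 0 = Δ 3 := by have := hper 0; norm_num at this; omega
  have d2 : Δ (-1) = Δ 2 := by have := hper (-1); norm_num at this; omega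
  have d1 : Δ (-2) = Δ 1 := by have := hper (-2); norm_num at this; omega
  have d3' : Δ (-3) = Δ 3 := by have := hper (-3); norm_num at this; omega
  have d2' : Δ (-4) = Δ 2 := by
    have := hper (-4); norm_num at this; omega
  have r0 : (1 - X ^ 3) * H 0 + (-(C (R := ℤ) (Δ 3)) * X) * H 1 + (C (R := ℤ) (Δ 1) * X ^ 2) * H 2 = P := by
    have h := hrec 0
    rw [hHper 0] at h
    simp only [show (-0 : ℤ) = 0 from neg_zero, show (-0 - 2 : ℤ) = -2 by norm_num, show (0 - 2 : ℤ) = -2 by norm_num,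
        show (0 + 1 : ℤ) = 1 by norm_num, show (0 + 2 : ℤ) = 2 by norm_num] at h
    rw [d30, d1] at h
    linear_combination h
  have r1 : (C (R := ℤ) (Δ 3) * X ^ 2) * H 0 + (1 - X ^ 3) * H 1 + (-(C (R := ℤ) (Δ 2)) * X) * H 2 = P := by
    have h := hrec 1
    rw [hHper 1] at h
    simp only [show (-1 - 2 : ℤ) = -3 by norm_num, show (1 + 1 : ℤ) = 2 by norm_num,
        show (1 + 2 : ℤ) = 0 + 3 by norm_num] at h
    rw [hHper 0, d2, d3'] at h
    linear_combination h
  have r2 : (-(C (R := ℤ) (Δ 1)) * X) * H 0 + (C (R := ℤ) (Δ 2) * X ^ 2) * H 1 + (1 - X ^ 3) * H 2 = P := by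
    have h := hrec 2
    rw [hHper 2] at h
    simp only [show (2 + 1 : ℤ) = 0 + 3 by norm_num,
        show (2 + 2 : ℤ) = 1 + 3 by norm_num,
        show (-2 - 2 : ℤ) = -4 by norm_num] at h
    rw [hHper 0, hHper 1, d1, d2'] at h
    linear_combination h
  have hdet : IsUnit D.det := by
    rw [isUnit_iff_constantCoeff]
    have : constantCoeff (R := ℤ) D.det = 1 := by
      rw [hD, Matrix.det_fin_three]
      simp
    rw [this]; exact isUnit_one
  have hUnit : IsUnit D := D.isUnit_iff_isUnit_det.mpr hdet
  have hmv : D *ᵥ ![H 0, H 1, H 2] = ![P, P, P] := by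
    subst hD
    funext i
    fin_cases i <;>
      simp [Matrix.mulVec, dotProduct, Fin.sum_univ_three] <;>
      simp only [cast_eq] <;>
      [linear_combination r0; linear_combination r1; linear_combination r2]
  refine ⟨hUnit, hmv, ?_⟩
  rw [← hmv, Matrix.mulVec_mulVec, Matrix.nonsing_inv_mul D hdet, Matrix.one_mulVec]
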